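/- Let p be an odd prime and k a finite unramified extension of ℚ_p. Then the Milnor K-group K₂^M(k) is p-divisible, i.e., K₂^M(k)/p = 0. -/

import Mathlib

open scoped TensorProduct

/-- The Steinberg subgroup of `kˣ ⊗_ℤ kˣ` (written additively), generated by the elements
`a ⊗ (1 − a)` for `a ≠ 0, 1`. -/
noncomputable def steinbergSubgroup (K : Type) [Field K] :
    AddSubgroup (Additive Kˣ ⊗[ℤ] Additive Kˣ) :=
  AddSubgroup.closure
    {z | ∃ (a : Kˣ) (h : (a : K) ≠ 1),
      z = Additive.ofMul a ⊗ₜ[ℤ]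
        Additive.ofMul (Units.mk0 (1 - (a : K)) (sub_ne_zero.mpr h.symm))}

/-- The Milnor K-group `K₂^M(k)`: the quotient of `kˣ ⊗_ℤ kˣ` by the Steinberg relations
`a ⊗ (1 − a)`. -/
noncomputable def MilnorK2 (K : Type) [Field K] : Type :=
  (Additive Kˣ ⊗[ℤ] Additive Kˣ) ⧸ steinbergSubgroup K

noncomputable instance (K : Type) [Field K] : AddCommGroup (MilnorK2 K) :=
  QuotientAddGroup.Quotient.addCommGroup _


section K2Calc

variable {K : Type} [Field K]

noncomputable def sym (a b : Kˣ) : MilnorK2 K :=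
  QuotientAddGroup.mk (Additive.ofMul a ⊗ₜ[ℤ] Additive.ofMul b)

lemma sym_mul_left (a b c : Kˣ) : sym (a*b) c = sym a c + sym b c := by
  show QuotientAddGroup.mk _ = _
  rw [ofMul_mul, TensorProduct.add_tmul]; rfl

lemma sym_mul_right (a b c : Kˣ) : sym a (b*c) = sym a b + sym a c := by
  show QuotientAddGroup.mk _ = _
  rw [ofMul_mul, TensorProduct.tmul_add]; rfl

lemma sym_one_left (b : Kˣ) : sym 1 b = 0 := by
  show QuotientAddGroup.mk _ = _
  rw [ofMul_one, TensorProduct.zero_tmul]; rfl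

lemma sym_one_right (a : Kˣ) : sym a 1 = 0 := by
  show QuotientAddGroup.mk _ = _
  rw [ofMul_one, TensorProduct.tmul_zero]; rfl

lemma sym_inv_left (a b : Kˣ) : sym a⁻¹ b = - sym a b := by
  have := sym_mul_left a a⁻¹ b
  rw [mul_inv_cancel, sym_one_left] at this
  exact eq_neg_of_add_eq_zero_right this.symm

lemma sym_inv_right (a b : Kˣ) : sym a b⁻¹ = - sym a b := by
  have := sym_mul_right a b b⁻¹
  rw [mul_inv_cancel, sym_one_right] at this
  exact eq_neg_of_add_eq_zero_right this.symm

lemma sym_pow_left (a b : Kˣ) (n : ℕ) : sym (a^n) b = n • sym a b := by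
  induction n with
  | zero => simpa using sym_one_left b
  | succ n ih => rw [pow_succ, sym_mul_left, ih, succ_nsmul]

lemma sym_pow_right (a b : Kˣ) (n : ℕ) : sym a (b^n) = n • sym a b := by
  induction n with
  | zero => simpa using sym_one_right a
  | succ n ih => rw [pow_succ, sym_mul_right, ih, succ_nsmul]

lemma sym_zpow_left (a b : Kˣ) (n : ℤ) : sym (a^n) b = n • sym a b := by
  cases n with
  | ofNat m => simpa using sym_pow_left a b m
  | negSucc m =>
      rw [zpow_negSucc, sym_inv_left, sym_pow_left, negSucc_zsmul]

lemma sym_zpow_right (a b : Kˣ) (n : ℤ) : sym a (b^n) = n • sym a b := by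
  cases n with
  | ofNat m => simpa using sym_pow_right a b m
  | negSucc m =>
      rw [zpow_negSucc, sym_inv_right, sym_pow_right, negSucc_zsmul]

lemma sym_steinberg (a : Kˣ) (h : (a : K) ≠ 1) :
    sym a (Units.mk0 (1 - (a : K)) (sub_ne_zero.mpr h.symm)) = 0 := by
  rw [sym]; refine (QuotientAddGroup.eq_zero_iff _).mpr ?_
  exact AddSubgroup.subset_closure ⟨a, h, rfl⟩

/-- `{a, -a} = 0`. -/
lemma sym_neg_self (a : Kˣ) : sym a (-a) = 0 := by
  rcases eq_or_ne (a : K) 1 with h1 | h1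
  · have : a = 1 := Units.ext h1
    subst this
    have : (-1 : Kˣ) = -1 := rfl
    rw [sym_one_left]
  · have h0 : (a : K) ≠ 0 := a.ne_zero
    have hinv : ((a⁻¹ : Kˣ) : K) ≠ 1 := by
      simp only [Units.val_inv_eq_inv_val]
      intro h; apply h1; field_simp at h; simp [h]
    have key : (-a : Kˣ) =
        (Units.mk0 (1 - (a:K)) (sub_ne_zero.mpr h1.symm)) *
        (Units.mk0 (1 - ((a⁻¹:Kˣ):K)) (sub_ne_zero.mpr hinv.symm))⁻¹ := by
      apply Units.ext
      have h2 : (1 - ((a:K))⁻¹) ≠ 0 := by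
        intro h
        apply hinv
        simp only [Units.val_inv_eq_inv_val]
        linear_combination -h
      simp only [Units.val_neg, Units.val_mul, Units.val_inv_eq_inv_val, Units.val_mk0]
      rw [← div_eq_mul_inv, eq_div_iff h2]
      field_simp
      ring
    rw [key, sym_mul_right, sym_steinberg a h1, sym_inv_right, zero_add,
      ← sym_inv_left, sym_steinberg a⁻¹ hinv]

lemma sym_antisymm (a b : Kˣ) : sym b a = - sym a b := by
  have h := sym_neg_self (a*b)
  have e1 : (-(a*b)) = (-a)*b := by apply Units.ext; simp
  have e2 : (-(a*b)) = a*(-b) := by apply Units.ext; simp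
  rw [sym_mul_left] at h
  nth_rewrite 1 [e1] at h
  nth_rewrite 1 [e2] at h
  rw [sym_mul_right, sym_mul_right, sym_neg_self, sym_neg_self] at h
  have : sym a b + sym b a = 0 := by
    linear_combination (norm := abel_nf) h
  exact eq_neg_of_add_eq_zero_right this

/-- The subgroup of p-divisible elements `p • K₂`. -/
noncomputable def Pdiv (p : ℕ) : AddSubgroup (MilnorK2 K) :=
  (AddMonoidHom.mk' (fun z : MilnorK2 K => p • z) (fun a b => smul_add p a b)).range

lemma pdiv_mem (p : ℕ) (w : MilnorK2 K) : p • w ∈ Pdiv (K := K) p := ⟨w, rfl⟩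

lemma sym_pow_left_mem (p : ℕ) (a b : Kˣ) : sym (a^p) b ∈ Pdiv (K := K) p := by
  rw [sym_pow_left]; exact pdiv_mem p _

lemma sym_pow_right_mem (p : ℕ) (a b : Kˣ) : sym a (b^p) ∈ Pdiv (K := K) p := by
  rw [sym_pow_right]; exact pdiv_mem p _

lemma sym_neg_one_right_mem (p : ℕ) (hodd : Odd p) (a : Kˣ) :
    sym a (-1) ∈ Pdiv (K := K) p := by
  have : ((-1 : Kˣ))^p = -1 := Odd.neg_one_pow hodd
  rw [← this]; exact sym_pow_right_mem p a (-1)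

lemma key_identity (p : ℕ) (α β : K) (hα0 : α ≠ 0) (hα1 : α ≠ 1)
    (hβ1 : β ≠ 1) (hαβ : α*β ≠ 1) (c : Kˣ) (hc : ((c:K))^p = 1 - α*β) :
    sym (Units.mk0 (1-β) (sub_ne_zero.mpr (Ne.symm hβ1)))
        (Units.mk0 (1-α) (sub_ne_zero.mpr (Ne.symm hα1))) ∈ Pdiv (K := K) p := by
  set A : Kˣ := Units.mk0 α hα0 with hA
  set B : Kˣ := Units.mk0 (1-β) (sub_ne_zero.mpr (Ne.symm hβ1)) with hB
  set C : Kˣ := Units.mk0 (1-α*β) (sub_ne_zero.mpr (Ne.symm hαβ)) with hC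
  set D : Kˣ := Units.mk0 (1-α) (sub_ne_zero.mpr (Ne.symm hα1)) with hD
  have hCc : C = c^p := by apply Units.ext; rw [Units.val_pow_eq_pow_val, hc]; rfl
  have hαβ0 : 1 - α*β ≠ 0 := sub_ne_zero.mpr (Ne.symm hαβ)
  set U : Kˣ := A * B * C⁻¹ with hU
  have hUval : (U : K) = α * (1-β) * (1-α*β)⁻¹ := by
    rw [hU]; simp [hA, hB, hC]
  have hU1 : (U : K) ≠ 1 := by
    rw [hUval]
    intro h
    apply hα1
    field_simp at h
    linear_combination h
  have hmk : Units.mk0 (1 - (U:K)) (sub_ne_zero.mpr hU1.symm) = D * C⁻¹ := by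
    apply Units.ext
    simp only [Units.val_mul, Units.val_inv_eq_inv_val, hD, hC, Units.val_mk0, hUval]
    field_simp
    ring
  have hst := sym_steinberg U hU1
  rw [hmk] at hst
  rw [hU] at hst
  simp only [sym_mul_left, sym_mul_right, sym_inv_left, sym_inv_right, neg_neg] at hst
  have hAD : sym A D = 0 := sym_steinberg A hα1
  have hgoal : sym B D = sym A C + sym B C + sym C D - sym C C := by
    rw [hAD] at hst
    linear_combination (norm := abel_nf) hst
  rw [hgoal]
  have m1 : sym A C ∈ Pdiv (K := K) p := by rw [hCc]; exact sym_pow_right_mem p _ _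
  have m2 : sym B C ∈ Pdiv (K := K) p := by rw [hCc]; exact sym_pow_right_mem p _ _
  have m3 : sym C D ∈ Pdiv (K := K) p := by rw [hCc]; exact sym_pow_left_mem p _ _
  have m4 : sym C C ∈ Pdiv (K := K) p := by rw [hCc]; exact sym_pow_left_mem p _ _
  exact AddSubgroup.sub_mem _ (AddSubgroup.add_mem _ (AddSubgroup.add_mem _ m1 m2) m3) m4


end K2Calc

section Arith
variable (p : ℕ) [hp : Fact p.Prime]
variable (O : Type) [CommRing O] [IsDomain O] [IsDiscreteValuationRing O]
    [IsAdicComplete (IsLocalRing.maximalIdeal O) O]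

lemma choose_mul_pow_div (hodd : p ≠ 2) :
    ∀ k, 2 ≤ k → (p^3 : ℕ) ∣ p.choose k * p^k := by
  intro k hk
  rcases eq_or_lt_of_le hk with h2 | h3
  · subst h2
    have hplt : 2 < p := lt_of_le_of_ne hp.out.two_le (Ne.symm hodd)
    have h1 : p ∣ p.choose 2 := hp.out.dvd_choose_self (by norm_num) hplt
    obtain ⟨c, hc⟩ := h1
    exact ⟨c, by rw [hc]; ring⟩
  · exact Dvd.dvd.mul_left (pow_dvd_pow p h3) _

/-- the "tail" polynomial `H` such that `(1+pY)^p = 1 + p²Y + p³ H(Y)`. -/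
noncomputable def Htail (y : O) : O :=
  ∑ k ∈ Finset.Icc 2 p, ((p.choose k * p^k / p^3 : ℕ) : O) * y^k

lemma Htail_identity (hodd : p ≠ 2) (y : O) :
    (1 + (p:O)*y)^p = 1 + (p:O)^2*y + (p:O)^3 * Htail p O y := by
  have hsplit : Finset.range (p+1) = insert 0 (insert 1 (Finset.Icc 2 p)) := by
    ext k
    simp only [Finset.mem_range, Finset.mem_insert, Finset.mem_Icc]
    constructor
    · intro h; omega
    · rintro (rfl | rfl | ⟨h1, h2⟩)
      · exact Nat.succ_pos p
      · exact Nat.lt_succ_of_le hp.out.one_le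
      · exact Nat.lt_succ_of_le h2
  have hadd := add_pow ((p:O)*y) 1 p
  rw [hsplit] at hadd
  rw [Finset.sum_insert (by simp), Finset.sum_insert (by simp)] at hadd
  have htail : ∑ k ∈ Finset.Icc 2 p, ((p:O)*y)^k * 1^(p-k) * (p.choose k : O)
      = (p:O)^3 * Htail p O y := by
    rw [Htail, Finset.mul_sum]
    apply Finset.sum_congr rfl
    intro k hk
    rw [Finset.mem_Icc] at hk
    have hc : p^3 * (p.choose k * p^k / p^3) = p.choose k * p^k :=
      Nat.mul_div_cancel' (choose_mul_pow_div p hodd k hk.1)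
    have hcast : ((p^3 * (p.choose k * p^k / p^3) : ℕ) : O)
        = ((p.choose k * p^k : ℕ) : O) := by rw [hc]
    push_cast at hcast
    linear_combination (-(y^k)) * hcast
  rw [htail] at hadd
  rw [show (1 + (p:O)*y) = ((p:O)*y + 1) by ring, hadd]
  simp [Nat.choose_one_right, Nat.choose_zero_right]
  ring

lemma Htail_sub_dvd (y z : O) : (y - z) ∣ Htail p O y - Htail p O z := by
  rw [Htail, Htail, ← Finset.sum_sub_distrib]
  apply Finset.dvd_sum
  intro k _
  rw [← mul_sub]
  exact Dvd.dvd.mul_left (sub_dvd_pow_sub_pow y z k) _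

lemma exists_pth_root (hodd : p ≠ 2) (hunram : Irreducible (p:O)) (x : O) :
    ∃ y : O, (1 + (p:O)*y)^p = 1 + (p:O)^2 * x := by
  have hmax : IsLocalRing.maximalIdeal O = Ideal.span {(p:O)} :=
    (IsDiscreteValuationRing.irreducible_iff_uniformizer _).mp hunram
  have hmem : ∀ (n:ℕ) (a : O),
      a ∈ (IsLocalRing.maximalIdeal O ^ n • ⊤ : Submodule O O) ↔ (p:O)^n ∣ a := by
    intro n a
    rw [smul_eq_mul, Ideal.mul_top, hmax, Ideal.span_singleton_pow, Ideal.mem_span_singleton]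
  set H : O → O := Htail p O with hH
  let y : ℕ → O := fun n => Nat.rec x (fun _ yn => x - (p:O) * H yn) n
  have hy0 : y 0 = x := rfl
  have hys : ∀ n, y (n+1) = x - (p:O) * H (y n) := fun n => rfl
  have hstep : ∀ n, (p:O)^(n+1) ∣ y (n+1) - y n := by
    intro n
    induction n with
    | zero => exact ⟨-(H x), by rw [hys, hy0]; ring⟩
    | succ n ih =>
        obtain ⟨c, hc⟩ := Htail_sub_dvd p O (y (n+1)) (y n)
        obtain ⟨d, hd⟩ := ih
        refine ⟨-(d * c), ?_⟩
        rw [hys (n+1), hys n]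
        have : H (y (n+1)) - H (y n) = (y (n+1) - y n) * c := hc
        calc x - (p:O) * H (y (n+1)) - (x - (p:O) * H (y n))
            = -((p:O) * (H (y (n+1)) - H (y n))) := by ring
          _ = -((p:O) * ((y (n+1) - y n) * c)) := by rw [this]
          _ = -((p:O) * ((p:O)^(n+1) * d * c)) := by rw [hd]
          _ = (p:O)^(n+1+1) * -(d * c) := by ring
  have htrans : ∀ m n, m ≤ n → (p:O)^m ∣ y n - y m := by
    intro m n h
    induction h with
    | refl => simp
    | @step n' hmn ih =>
        have h1 : (p:O)^m ∣ y (n'+1) - y n' :=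
          dvd_trans (pow_dvd_pow _ (Nat.le_succ_of_le hmn)) (hstep n')
        have := dvd_add h1 ih
        rwa [sub_add_sub_cancel] at this
  obtain ⟨L, hL⟩ := IsPrecomplete.prec (IsAdicComplete.toIsPrecomplete
    (I := IsLocalRing.maximalIdeal O) (M := O))
    (f := y) (by
      intro m n hmn
      rw [SModEq.sub_mem, hmem]
      exact dvd_sub_comm.mp (htrans m n hmn))
  have hLmem : ∀ n, (p:O)^n ∣ y n - L := by
    intro n
    have := (hL n)
    rw [SModEq.sub_mem, hmem] at this
    exact this
  have hE : L - x + (p:O) * H L = 0 := by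
    apply IsHausdorff.haus (IsAdicComplete.toIsHausdorff
      (I := IsLocalRing.maximalIdeal O) (M := O))
    intro n
    rw [SModEq.sub_mem, sub_zero, hmem]
    obtain ⟨c, hc⟩ := hLmem (n+1)
    obtain ⟨d, hd⟩ := Htail_sub_dvd p O L (y n)
    obtain ⟨e, he⟩ := hLmem n
    refine dvd_trans (pow_dvd_pow _ (Nat.le_succ n)) ⟨-c + (-(e * d)), ?_⟩
    have hyn1 : y (n+1) = x - (p:O) * H (y n) := hys n
    have hLyn : L - y n = (p:O)^n * (-e) := by rw [← neg_sub, he]; ring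
    calc L - x + (p:O) * H L
        = -(y (n+1) - L) + (y (n+1) - x + (p:O) * H (y n)) + (p:O) * (H L - H (y n)) := by ring
      _ = -(y (n+1) - L) + (p:O) * ((L - y n) * d) := by rw [hyn1, hd]; ring
      _ = -((p:O)^(n+1) * c) + (p:O) * ((p:O)^n * (-e) * d) := by rw [hc, hLyn]
      _ = (p:O)^(n+1) * (-c + (-(e * d))) := by ring
  exact ⟨L, by rw [Htail_identity p O hodd L]; linear_combination (p:O)^2 * hE⟩

lemma unit_decomp [Finite (IsLocalRing.ResidueField O)] [CharP (IsLocalRing.ResidueField O) p]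
    (hunram : Irreducible (p:O)) (u : Oˣ) :
    ∃ (v : Oˣ) (t : O), (u:O) = (v:O)^p * (1 + (p:O)*t) := by
  have hmax : IsLocalRing.maximalIdeal O = Ideal.span {(p:O)} :=
    (IsDiscreteValuationRing.irreducible_iff_uniformizer _).mp hunram
  haveI : ExpChar (IsLocalRing.ResidueField O) p := ExpChar.prime hp.out
  have hfrob : Function.Surjective
      (fun c : IsLocalRing.ResidueField O => c^p) := by
    have hinj : Function.Injective (fun c : IsLocalRing.ResidueField O => c^p) := by
      intro a b hab
      exact frobenius_inj (IsLocalRing.ResidueField O) p hab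
    exact Finite.surjective_of_injective hinj
  obtain ⟨d, hd⟩ := hfrob (IsLocalRing.residue O (u:O))
  obtain ⟨v₀, hv₀⟩ := Ideal.Quotient.mk_surjective (I := IsLocalRing.maximalIdeal O) d
  have hv₀res : IsLocalRing.residue O v₀ = d := hv₀
  have hune : IsLocalRing.residue O (u:O) ≠ 0 := by
    intro h
    have := (u.isUnit.map (IsLocalRing.residue O))
    rw [h] at this
    exact not_isUnit_zero this
  have hd0 : d ≠ 0 := by
    intro h; apply hune; rw [← hd, h]; simp
    exact hp.out.ne_zero
  have hv₀unit : IsUnit v₀ := by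
    by_contra h
    have : v₀ ∈ IsLocalRing.maximalIdeal O := h
    rw [← Ideal.Quotient.eq_zero_iff_mem] at this
    exact hd0 (hv₀res ▸ this)
  obtain ⟨v, hv⟩ := hv₀unit
  set w : Oˣ := (v⁻¹)^p * u with hw
  have hvw : (v:O)^p * (w:O) = (u:O) := by
    have h1 : (v * v⁻¹ : Oˣ) = 1 := mul_inv_cancel v
    calc (v:O)^p * (w:O) = ((v * v⁻¹ : Oˣ):O)^p * (u:O) := by rw [hw]; push_cast; ring
      _ = (u:O) := by rw [h1]; simp
  have hres : d^p * IsLocalRing.residue O (w:O) = d^p * 1 := by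
    have h2 := congrArg (IsLocalRing.residue O) hvw
    rw [map_mul, map_pow, hv, hv₀res] at h2
    rw [h2, ← hd, mul_one]
  have hwres : IsLocalRing.residue O (w:O) = 1 :=
    mul_left_cancel₀ (pow_ne_zero _ hd0) hres
  have hmem : (w:O) - 1 ∈ IsLocalRing.maximalIdeal O := by
    have : IsLocalRing.residue O ((w:O) - 1) = 0 := by rw [map_sub, hwres]; simp
    exact Ideal.Quotient.eq_zero_iff_mem.mp this
  rw [hmax, Ideal.mem_span_singleton] at hmem
  obtain ⟨t, ht⟩ := hmem
  refine ⟨v, t, ?_⟩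
  rw [← hvw]
  have hwt : (w:O) = 1 + (p:O)*t := by linear_combination ht
  rw [hwt]
end Arith


section Final
variable (p : ℕ) [hp : Fact p.Prime]
variable (O : Type) [CommRing O] [IsDomain O] [IsDiscreteValuationRing O]
    [IsAdicComplete (IsLocalRing.maximalIdeal O) O]
variable (K : Type) [Field K] [Algebra O K] [IsFractionRing O K]

lemma frac_decomp (hunram : Irreducible (p:O))
    (hπ0 : algebraMap O K ((p:ℕ):O) ≠ 0) (a : Kˣ) :
    ∃ (n : ℤ) (u : Oˣ), a = (Units.mk0 (algebraMap O K ((p:ℕ):O)) hπ0)^n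
      * Units.map (algebraMap O K : O →+* K).toMonoidHom u := by
  obtain ⟨r, s, hs, heq⟩ := IsFractionRing.div_surjective (A := O) ((a:K))
  have hs0 : s ≠ 0 := nonZeroDivisors.ne_zero hs
  have hr0 : r ≠ 0 := by
    intro h
    apply a.ne_zero
    rw [← heq, h, map_zero, zero_div]
  obtain ⟨m, u₁, hr⟩ := IsDiscreteValuationRing.eq_unit_mul_pow_irreducible hr0 hunram
  obtain ⟨k, u₂, hsd⟩ := IsDiscreteValuationRing.eq_unit_mul_pow_irreducible hs0 hunram
  refine ⟨(m:ℤ) - (k:ℤ), u₁ * u₂⁻¹, ?_⟩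
  apply Units.ext
  set ι := algebraMap O K with hι
  have hu2 : ι ↑u₂ * ι ↑(u₂⁻¹) = 1 := by
    rw [← map_mul]
    norm_cast
    simp
  have hu2ne : ι ↑u₂ ≠ 0 := left_ne_zero_of_mul_eq_one hu2
  have hu2ne' : ι ↑(u₂⁻¹) ≠ 0 := right_ne_zero_of_mul_eq_one hu2
  rw [Units.val_mul, Units.val_zpow_eq_zpow_val]
  simp only [Units.coe_map, Units.val_mk0, RingHom.toMonoidHom_eq_coe, MonoidHom.coe_coe]
  rw [← heq, hr, hsd, map_mul, map_mul, map_pow, map_pow, zpow_sub₀ hπ0, zpow_natCast,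
    zpow_natCast]
  have hval : ((u₁ * u₂⁻¹ : Oˣ) : O) = (↑u₁ : O) * ↑(u₂⁻¹) := rfl
  rw [hval, map_mul]
  rw [div_eq_iff (mul_ne_zero hu2ne (pow_ne_zero _ hπ0)), ← hι, div_mul_eq_mul_div,
    div_mul_eq_mul_div, eq_div_iff (pow_ne_zero _ hπ0)]
  linear_combination (-(ι ↑u₁ * (ι ((p:ℕ):O))^m * (ι ((p:ℕ):O))^k)) * hu2
end Final


/-- Let `p` be an odd prime and `k` a finite unramified extension of `ℚ_p`.
Then the Milnor K-group `K₂^M(k)` is `p`-divisible, i.e. `K₂^M(k)/p = 0`.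

The finite unramified extension `k` of `ℚ_p` is encoded as the fraction field `K` of a
complete discrete valuation ring `O` of characteristic zero with finite residue field of
characteristic `p`, in which `p` remains a uniformizer (`Irreducible (p : O)`, i.e. the
absolute ramification index is `1`). -/
theorem milnorK2_p_divisible_of_unramified
    (p : ℕ) [Fact p.Prime] (hodd : p ≠ 2)
    (O : Type) [CommRing O] [IsDomain O] [IsDiscreteValuationRing O]
    [IsAdicComplete (IsLocalRing.maximalIdeal O) O]
    [Finite (IsLocalRing.ResidueField O)] [CharP (IsLocalRing.ResidueField O) p]
    (K : Type) [Field K] [CharZero K] [Algebra O K] [IsFractionRing O K]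
    (hunram : Irreducible (p : O)) :
    ∀ z : MilnorK2 K, ∃ w : MilnorK2 K, z = p • w := by
  intro z
  have hp : Fact p.Prime := inferInstance
  have hinj : Function.Injective (algebraMap O K) := IsFractionRing.injective O K
  have hpO : ((p:ℕ):O) ≠ 0 := hunram.ne_zero
  have hπ0 : algebraMap O K ((p:ℕ):O) ≠ 0 := fun h => hpO (hinj (by rw [h, map_zero]))
  set π : Kˣ := Units.mk0 (algebraMap O K ((p:ℕ):O)) hπ0 with hπ
  set ιu : Oˣ →* Kˣ := Units.map (algebraMap O K : O →+* K).toMonoidHom with hιu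
  have hιuval : ∀ u : Oˣ, ((ιu u : Kˣ) : K) = algebraMap O K (u:O) := fun u => rfl
  have hmax : IsLocalRing.maximalIdeal O = Ideal.span {((p:ℕ):O)} :=
    (IsDiscreteValuationRing.irreducible_iff_uniformizer _).mp hunram
  have hone_not : (1:O) ∉ IsLocalRing.maximalIdeal O := fun h =>
    (IsLocalRing.maximalIdeal.isMaximal O).ne_top (Ideal.eq_top_of_isUnit_mem _ h isUnit_one)
  have hmem_p : ∀ t : O, ((p:ℕ):O) * t ∈ IsLocalRing.maximalIdeal O := by
    intro t; rw [hmax]; exact Ideal.mem_span_singleton.mpr (dvd_mul_right _ _)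
  have h1unit : ∀ t : O, IsUnit (1 + ((p:ℕ):O)*t) := by
    intro t
    by_contra h
    have h2 : 1 + ((p:ℕ):O)*t ∈ IsLocalRing.maximalIdeal O := h
    have h3 := Ideal.sub_mem _ h2 (hmem_p t)
    rw [add_sub_cancel_right] at h3
    exact hone_not h3
  set W : O → Kˣ := fun t => ιu (h1unit t).unit with hWdef
  have hWval : ∀ t : O, ((W t : Kˣ) : K) = algebraMap O K (1 + ((p:ℕ):O)*t) := by
    intro t
    show algebraMap O K ((h1unit t).unit : O) = _
    rw [IsUnit.unit_spec]
  have hW0 : W 0 = 1 := by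
    apply Units.ext
    rw [hWval]
    simp
  have hne0 : ∀ s : O, s ≠ 0 → (algebraMap O K (-(((p:ℕ):O) * s))) ≠ 0 := by
    intro s hs h
    have h2 : (-(((p:ℕ):O) * s)) = 0 := hinj (by rw [h, map_zero])
    rw [neg_eq_zero] at h2
    exact (mul_ne_zero hpO hs) h2
  have hne1 : ∀ s : O, (algebraMap O K (-(((p:ℕ):O) * s))) ≠ 1 := by
    intro s h
    have h2 : (-(((p:ℕ):O) * s)) = 1 := hinj (by rw [h, map_one])
    apply hone_not
    rw [← h2]
    exact neg_mem (hmem_p s)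
  have hmk0W : ∀ s : O, ∀ hne : (1 - algebraMap O K (-(((p:ℕ):O) * s))) ≠ 0,
      Units.mk0 (1 - algebraMap O K (-(((p:ℕ):O) * s))) hne = W s := by
    intro s hne
    apply Units.ext
    rw [Units.val_mk0, hWval, map_add, map_one, map_neg, sub_neg_eq_add]
  -- symbols of two principal units are p-divisible
  have hprin : ∀ s t : O, sym (W s) (W t) ∈ Pdiv (K := K) p := by
    intro s t
    rcases eq_or_ne t 0 with rfl | ht0
    · rw [hW0, sym_one_right]; exact zero_mem _
    rcases eq_or_ne s 0 with rfl | hs0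
    · rw [hW0, sym_one_left]; exact zero_mem _
    set α := algebraMap O K (-(((p:ℕ):O) * t)) with hα
    set β := algebraMap O K (-(((p:ℕ):O) * s)) with hβ
    have hα0 : α ≠ 0 := hne0 t ht0
    have hα1 : α ≠ 1 := hne1 t
    have hβ1 : β ≠ 1 := hne1 s
    have hαβ : α * β ≠ 1 := by
      rw [hα, hβ, ← map_mul]
      intro h
      have h2 : (-(((p:ℕ):O) * t)) * (-(((p:ℕ):O) * s)) = 1 := hinj (by rw [h, map_one])
      apply hone_not
      rw [← h2]
      have h3 : (-(((p:ℕ):O) * t)) * (-(((p:ℕ):O) * s)) = ((p:ℕ):O) * (t * (((p:ℕ):O) * s)) := by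
        ring
      rw [h3]
      exact hmem_p _
    obtain ⟨y, hy⟩ := exists_pth_root p O hodd hunram (-(t*s))
    have hc : ((W y : Kˣ) : K)^p = 1 - α*β := by
      rw [hWval, ← map_pow, hy, hα, hβ, ← map_mul]
      have h4 : (1 + ((p:ℕ):O)^2 * (-(t*s)))
          = 1 - (-(((p:ℕ):O)*t) * -(((p:ℕ):O)*s)) := by ring
      rw [h4, map_sub, map_one]
    have hkey := key_identity p α β hα0 hα1 hβ1 hαβ (W y) hc
    rw [hmk0W s, hmk0W t] at hkey
    exact hkey
  -- symbols with a unit in the first slot reduce to principal units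
  have hunit : ∀ (u : Oˣ) (b : Kˣ), (∀ t : O, sym (W t) b ∈ Pdiv (K := K) p) →
      sym (ιu u) b ∈ Pdiv (K := K) p := by
    intro u b hb
    obtain ⟨v, t, huv⟩ := unit_decomp p O hunram u
    have h5 : ιu u = (ιu v)^p * W t := by
      apply Units.ext
      rw [Units.val_mul, Units.val_pow_eq_pow_val, hWval, hιuval, hιuval, ← map_pow, ← map_mul,
        huv]
    rw [h5, sym_mul_left]
    exact add_mem (sym_pow_left_mem p _ _) (hb t)
  -- symbols {π, principal unit}
  have hπW : ∀ t : O, sym π (W t) ∈ Pdiv (K := K) p := by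
    intro t
    rcases eq_or_ne t 0 with rfl | ht0
    · rw [hW0, sym_one_right]; exact zero_mem _
    by_cases htu : IsUnit t
    · set A : Kˣ := Units.mk0 (algebraMap O K (-(((p:ℕ):O)*t))) (hne0 t ht0) with hA
      have hA1 : (A:K) ≠ 1 := hne1 t
      have hst := sym_steinberg A hA1
      simp only [hA, Units.val_mk0] at hst
      rw [hmk0W t] at hst
      rw [← hA] at hst
      have hntu : IsUnit (-t) := htu.neg
      have hAval : A = π * ιu hntu.unit := by
        apply Units.ext
        rw [Units.val_mul, hπ, hιuval, Units.val_mk0, Units.val_mk0, IsUnit.unit_spec,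
          ← map_mul]
        ring_nf
      rw [hAval, sym_mul_left] at hst
      have h6 : sym π (W t) = - sym (ιu hntu.unit) (W t) := eq_neg_of_add_eq_zero_left hst
      rw [h6]
      exact neg_mem (hunit hntu.unit (W t) (fun s => hprin s t))
    · have h7 : t ∈ IsLocalRing.maximalIdeal O := htu
      rw [hmax, Ideal.mem_span_singleton] at h7
      obtain ⟨t', ht'⟩ := h7
      obtain ⟨y, hy⟩ := exists_pth_root p O hodd hunram t'
      have h8 : W t = (W y)^p := by
        apply Units.ext
        rw [Units.val_pow_eq_pow_val, hWval, hWval, ← map_pow, hy, ht']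
        ring_nf
      rw [h8]
      exact sym_pow_right_mem p _ _
  have hWπ : ∀ t : O, sym (W t) π ∈ Pdiv (K := K) p := by
    intro t
    rw [sym_antisymm π (W t)]
    exact neg_mem (hπW t)
  have hππ : sym π π ∈ Pdiv (K := K) p := by
    have h9 : π = (-1) * (-π) := by simp
    nth_rewrite 2 [h9]
    rw [sym_mul_right]
    refine add_mem (sym_neg_one_right_mem p (hp.out.odd_of_ne_two hodd) π) ?_
    rw [sym_neg_self]
    exact zero_mem _
  have hπu : ∀ u : Oˣ, sym π (ιu u) ∈ Pdiv (K := K) p := by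
    intro u
    rw [sym_antisymm (ιu u) π]
    exact neg_mem (hunit u π hWπ)
  have huv : ∀ u v : Oˣ, sym (ιu u) (ιu v) ∈ Pdiv (K := K) p := by
    intro u v
    refine hunit u (ιu v) (fun t => ?_)
    rw [sym_antisymm (ιu v) (W t)]
    exact neg_mem (hunit v (W t) (fun s => hprin s t))
  have hsym : ∀ a b : Kˣ, sym a b ∈ Pdiv (K := K) p := by
    intro a b
    obtain ⟨m, u, ha⟩ := frac_decomp p O K hunram hπ0 a
    obtain ⟨n, v, hb⟩ := frac_decomp p O K hunram hπ0 b
    rw [ha, hb, ← hπ, ← hιu]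
    rw [sym_mul_left]
    refine add_mem ?_ ?_
    · rw [sym_zpow_left, sym_mul_right, sym_zpow_right]
      exact AddSubgroup.zsmul_mem _ (add_mem (AddSubgroup.zsmul_mem _ hππ n) (hπu v)) m
    · rw [sym_mul_right, sym_zpow_right]
      exact add_mem (AddSubgroup.zsmul_mem _ (hunit u π hWπ) n) (huv u v)
  suffices hz : z ∈ Pdiv (K := K) p by
    obtain ⟨w, hw⟩ := hz
    exact ⟨w, hw.symm⟩
  obtain ⟨t, rfl⟩ := QuotientAddGroup.mk'_surjective (steinbergSubgroup K) z
  refine TensorProduct.induction_on t ?_ (fun x y => ?_) (fun x y hx hy => ?_)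
  · exact zero_mem (Pdiv (K := K) p)
  · exact hsym x.toMul y.toMul
  · rw [map_add]
    exact add_mem hx hy
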